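/- If the sequent Γ ⊃ Δ is derivable in the sequent calculus G, then Γ together with the elementwise negations of Δ derives ⊥ in natural deduction: Γ ++ map Neg Δ ⊢ ⊥. -/

import Mathlib

inductive PropF (V : Type) : Type
  | Var : V → PropF V
  | Bot : PropF V
  | Conj : PropF V → PropF V → PropF V
  | Disj : PropF V → PropF V → PropF V
  | Impl : PropF V → PropF V → PropF V
deriving DecidableEq

variable {V : Type} [DecidableEq V]

def PropF.Neg (A : PropF V) : PropF V := A.Impl .Bot
def PropF.Top : PropF V := PropF.Neg .Bot

def TrueQ (v : V → Bool) : PropF V → Bool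
  | .Var p => v p
  | .Bot => false
  | .Conj B C => TrueQ v B && TrueQ v C
  | .Disj B C => TrueQ v B || TrueQ v C
  | .Impl B C => !(TrueQ v B) || TrueQ v C

def Satisfies (v : V → Bool) (Γ : List (PropF V)) : Prop := ∀ A ∈ Γ, TrueQ v A = true
def Models (Γ : List (PropF V)) (A : PropF V) : Prop := ∀ v, Satisfies v Γ → TrueQ v A = true
def Valid (A : PropF V) : Prop := Models [] A
def Validates (v : V → Bool) (Δ : List (PropF V)) : Prop := ∃ A ∈ Δ, TrueQ v A = true

inductive Nc : List (PropF V) → PropF V → Prop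
  | Nax (Γ : List (PropF V)) (A : PropF V) : A ∈ Γ → Nc Γ A
  | ImpI (Γ : List (PropF V)) (A B : PropF V) : Nc (A :: Γ) B → Nc Γ (A.Impl B)
  | ImpE (Γ : List (PropF V)) (A B : PropF V) : Nc Γ (A.Impl B) → Nc Γ A → Nc Γ B
  | BotC (Γ : List (PropF V)) (A : PropF V) : Nc (A.Neg :: Γ) .Bot → Nc Γ A
  | AndI (Γ : List (PropF V)) (A B : PropF V) : Nc Γ A → Nc Γ B → Nc Γ (A.Conj B)
  | AndE1 (Γ : List (PropF V)) (A B : PropF V) : Nc Γ (A.Conj B) → Nc Γ A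
  | AndE2 (Γ : List (PropF V)) (A B : PropF V) : Nc Γ (A.Conj B) → Nc Γ B
  | OrI1 (Γ : List (PropF V)) (A B : PropF V) : Nc Γ A → Nc Γ (A.Disj B)
  | OrI2 (Γ : List (PropF V)) (A B : PropF V) : Nc Γ B → Nc Γ (A.Disj B)
  | OrE (Γ : List (PropF V)) (A B C : PropF V) : Nc Γ (A.Disj B) → Nc (A :: Γ) C → Nc (B :: Γ) C → Nc Γ C

def Provable (A : PropF V) : Prop := Nc [] A

inductive NNF (V : Type) : Type
  | NPos : V → NNF V
  | NNeg : V → NNF V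
  | NBot : NNF V
  | NTop : NNF V
  | NConj : NNF V → NNF V → NNF V
  | NDisj : NNF V → NNF V → NNF V
deriving DecidableEq

def NNFtoPropF : NNF V → PropF V
  | .NPos p => .Var p
  | .NNeg p => (PropF.Var p).Neg
  | .NBot => .Bot
  | .NTop => PropF.Top
  | .NConj B C => (NNFtoPropF B).Conj (NNFtoPropF C)
  | .NDisj B C => (NNFtoPropF B).Disj (NNFtoPropF C)

mutual
def MakeNNF : PropF V → NNF V
  | .Var p => .NPos p
  | .Bot => .NBot
  | .Disj B C => .NDisj (MakeNNF B) (MakeNNF C)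
  | .Conj B C => .NConj (MakeNNF B) (MakeNNF C)
  | .Impl B C => .NDisj (MakeNNFN B) (MakeNNF C)
def MakeNNFN : PropF V → NNF V
  | .Var p => .NNeg p
  | .Bot => .NTop
  | .Disj B C => .NConj (MakeNNFN B) (MakeNNFN C)
  | .Conj B C => .NDisj (MakeNNFN B) (MakeNNFN C)
  | .Impl B C => .NConj (MakeNNF B) (MakeNNFN C)
end

inductive Lit (V : Type) : Type
  | LPos : V → Lit V
  | LNeg : V → Lit V
  | LBot : Lit V
  | LTop : Lit V
deriving DecidableEq

def LiteraltoPropF : Lit V → PropF V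
  | .LPos p => .Var p
  | .LNeg p => (PropF.Var p).Neg
  | .LBot => .Bot
  | .LTop => PropF.Top

abbrev Clause (V : Type) : Type := List (Lit V)
abbrev CNF (V : Type) : Type := List (Clause V)

abbrev ClausetoPropF (l : Clause V) : PropF V :=
  l.foldr (fun a r => (LiteraltoPropF a).Disj r) .Bot

def CNFtoPropF (ll : CNF V) : PropF V :=
  ll.foldr (fun c r => (ClausetoPropF c).Conj r) PropF.Top

def AddClause (l : Clause V) (ll : CNF V) : CNF V := ll.map (fun l2 => l ++ l2)
def Disjunct (ll ll2 : CNF V) : CNF V := ll.flatMap (fun l => AddClause l ll2)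

def MakeCNF : NNF V → CNF V
  | .NPos p => [[.LPos p]]
  | .NNeg p => [[.LNeg p]]
  | .NBot => [[.LBot]]
  | .NTop => [[.LTop]]
  | .NConj B C => MakeCNF B ++ MakeCNF C
  | .NDisj B C => Disjunct (MakeCNF B) (MakeCNF C)

def Valid_Clause (l : Clause V) : Prop :=
  Lit.LTop ∈ l ∨ ∃ p, Lit.LPos p ∈ l ∧ Lit.LNeg p ∈ l
def Valid_CNF (ll : CNF V) : Prop := ∀ l ∈ ll, Valid_Clause l

inductive AxiomH : PropF V → Prop
  | HOrI1 (A B : PropF V) : AxiomH (A.Impl (A.Disj B))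
  | HOrI2 (A B : PropF V) : AxiomH (B.Impl (A.Disj B))
  | HAndI (A B : PropF V) : AxiomH (A.Impl (B.Impl (A.Conj B)))
  | HOrE (A B C : PropF V) : AxiomH ((A.Disj B).Impl ((A.Impl C).Impl ((B.Impl C).Impl C)))
  | HAndE1 (A B : PropF V) : AxiomH ((A.Conj B).Impl A)
  | HAndE2 (A B : PropF V) : AxiomH ((A.Conj B).Impl B)
  | HS (A B C : PropF V) : AxiomH ((A.Impl (B.Impl C)).Impl ((A.Impl B).Impl (A.Impl C)))
  | HK (A B : PropF V) : AxiomH (A.Impl (B.Impl A))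
  | HClas (A : PropF V) : AxiomH ((A.Neg.Neg).Impl A)

inductive Hc : List (PropF V) → PropF V → Prop
  | Hass (A : PropF V) (Γ : List (PropF V)) : A ∈ Γ → Hc Γ A
  | Hax (A : PropF V) (Γ : List (PropF V)) : AxiomH A → Hc Γ A
  | HImpE (Γ : List (PropF V)) (A B : PropF V) : Hc Γ (A.Impl B) → Hc Γ A → Hc Γ B

inductive G : List (PropF V) → List (PropF V) → Prop
  | Gax (A : PropF V) (Γ Δ : List (PropF V)) : A ∈ Γ → A ∈ Δ → G Γ Δ
  | GBot (Γ Δ : List (PropF V)) : PropF.Bot ∈ Γ → G Γ Δ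
  | AndL (A B : PropF V) (Γ1 Γ2 Δ : List (PropF V)) : G (Γ1 ++ A :: B :: Γ2) Δ → G (Γ1 ++ (A.Conj B) :: Γ2) Δ
  | AndR (A B : PropF V) (Γ Δ1 Δ2 : List (PropF V)) : G Γ (Δ1 ++ A :: Δ2) → G Γ (Δ1 ++ B :: Δ2) → G Γ (Δ1 ++ (A.Conj B) :: Δ2)
  | OrL (A B : PropF V) (Γ1 Γ2 Δ : List (PropF V)) : G (Γ1 ++ A :: Γ2) Δ → G (Γ1 ++ B :: Γ2) Δ → G (Γ1 ++ (A.Disj B) :: Γ2) Δ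
  | OrR (A B : PropF V) (Γ Δ1 Δ2 : List (PropF V)) : G Γ (Δ1 ++ A :: B :: Δ2) → G Γ (Δ1 ++ (A.Disj B) :: Δ2)
  | ImpL (A B : PropF V) (Γ1 Γ2 Δ : List (PropF V)) : G (Γ1 ++ B :: Γ2) Δ → G (Γ1 ++ Γ2) (A :: Δ) → G (Γ1 ++ (A.Impl B) :: Γ2) Δ
  | ImpR (A B : PropF V) (Γ Δ1 Δ2 : List (PropF V)) : G (A :: Γ) (Δ1 ++ B :: Δ2) → G Γ (Δ1 ++ (A.Impl B) :: Δ2)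
  | Cut (A : PropF V) (Γ Δ : List (PropF V)) : G Γ (A :: Δ) → G (A :: Γ) Δ → G Γ Δ

inductive Gcf : List (PropF V) → List (PropF V) → Prop
  | Gax (p : V) (Γ Δ : List (PropF V)) : PropF.Var p ∈ Γ → PropF.Var p ∈ Δ → Gcf Γ Δ
  | GBot (Γ Δ : List (PropF V)) : PropF.Bot ∈ Γ → Gcf Γ Δ
  | AndL (A B : PropF V) (Γ1 Γ2 Δ : List (PropF V)) : Gcf (Γ1 ++ A :: B :: Γ2) Δ → Gcf (Γ1 ++ (A.Conj B) :: Γ2) Δ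
  | AndR (A B : PropF V) (Γ Δ1 Δ2 : List (PropF V)) : Gcf Γ (Δ1 ++ A :: Δ2) → Gcf Γ (Δ1 ++ B :: Δ2) → Gcf Γ (Δ1 ++ (A.Conj B) :: Δ2)
  | OrL (A B : PropF V) (Γ1 Γ2 Δ : List (PropF V)) : Gcf (Γ1 ++ A :: Γ2) Δ → Gcf (Γ1 ++ B :: Γ2) Δ → Gcf (Γ1 ++ (A.Disj B) :: Γ2) Δ
  | OrR (A B : PropF V) (Γ Δ1 Δ2 : List (PropF V)) : Gcf Γ (Δ1 ++ A :: B :: Δ2) → Gcf Γ (Δ1 ++ (A.Disj B) :: Δ2)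
  | ImpL (A B : PropF V) (Γ1 Γ2 Δ : List (PropF V)) : Gcf (Γ1 ++ B :: Γ2) Δ → Gcf (Γ1 ++ Γ2) (A :: Δ) → Gcf (Γ1 ++ (A.Impl B) :: Γ2) Δ
  | ImpR (A B : PropF V) (Γ Δ1 Δ2 : List (PropF V)) : Gcf (A :: Γ) (Δ1 ++ B :: Δ2) → Gcf Γ (Δ1 ++ (A.Impl B) :: Δ2)

def BigOr (Δ : List (PropF V)) : PropF V := Δ.foldr PropF.Disj .Bot

def size : PropF V → Nat
  | .Var _ => 0
  | .Bot => 0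
  | .Conj B C => (size B + size C).succ
  | .Disj B C => (size B + size C).succ
  | .Impl B C => (size B + size C).succ

def sizel (Γ : List (PropF V)) : Nat := (Γ.map size).sum
def sizes (Γ Δ : List (PropF V)) : Nat := sizel Γ + sizel Δ


theorem Nc_weaken {Γ Γ' : List (PropF V)} {A : PropF V} (h : Nc Γ A) (hs : Γ ⊆ Γ') :
    Nc Γ' A := by
  induction h generalizing Γ' with
  | Nax _ _ hA => exact .Nax _ _ (hs hA)
  | ImpI _ _ _ _ ih => exact .ImpI _ _ _ (ih (List.cons_subset_cons _ hs))
  | ImpE _ _ _ _ _ ih1 ih2 => exact .ImpE _ _ _ (ih1 hs) (ih2 hs)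
  | BotC _ _ _ ih => exact .BotC _ _ (ih (List.cons_subset_cons _ hs))
  | AndI _ _ _ _ _ ih1 ih2 => exact .AndI _ _ _ (ih1 hs) (ih2 hs)
  | AndE1 _ _ _ _ ih => exact .AndE1 _ _ _ (ih hs)
  | AndE2 _ _ _ _ ih => exact .AndE2 _ _ _ (ih hs)
  | OrI1 _ _ _ _ ih => exact .OrI1 _ _ _ (ih hs)
  | OrI2 _ _ _ _ ih => exact .OrI2 _ _ _ (ih hs)
  | OrE _ _ _ _ _ _ _ ih1 ih2 ih3 =>
    exact .OrE _ _ _ _ (ih1 hs) (ih2 (List.cons_subset_cons _ hs))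
      (ih3 (List.cons_subset_cons _ hs))

theorem Nc_subst {Γ Δ : List (PropF V)} {A : PropF V} (h : Nc Γ A)
    (hs : ∀ B ∈ Γ, Nc Δ B) : Nc Δ A := by
  induction h generalizing Δ with
  | Nax _ _ hA => exact hs _ hA
  | ImpI _ A _ _ ih =>
    refine .ImpI _ _ _ (ih ?_)
    intro B hB
    rcases List.mem_cons.mp hB with rfl | hB
    · exact .Nax _ _ (List.mem_cons_self)
    · exact Nc_weaken (hs _ hB) (List.subset_cons_self _ _)
  | ImpE _ _ _ _ _ ih1 ih2 => exact .ImpE _ _ _ (ih1 hs) (ih2 hs)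
  | BotC _ A _ ih =>
    refine .BotC _ _ (ih ?_)
    intro B hB
    rcases List.mem_cons.mp hB with rfl | hB
    · exact .Nax _ _ (List.mem_cons_self)
    · exact Nc_weaken (hs _ hB) (List.subset_cons_self _ _)
  | AndI _ _ _ _ _ ih1 ih2 => exact .AndI _ _ _ (ih1 hs) (ih2 hs)
  | AndE1 _ _ _ _ ih => exact .AndE1 _ _ _ (ih hs)
  | AndE2 _ _ _ _ ih => exact .AndE2 _ _ _ (ih hs)
  | OrI1 _ _ _ _ ih => exact .OrI1 _ _ _ (ih hs)
  | OrI2 _ _ _ _ ih => exact .OrI2 _ _ _ (ih hs)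
  | OrE _ _ _ _ _ _ _ ih1 ih2 ih3 =>
    refine .OrE _ _ _ _ (ih1 hs) (ih2 ?_) (ih3 ?_) <;>
    · intro B hB
      rcases List.mem_cons.mp hB with rfl | hB
      · exact .Nax _ _ (List.mem_cons_self)
      · exact Nc_weaken (hs _ hB) (List.subset_cons_self _ _)

theorem stmt11 {V : Type} [DecidableEq V] (Γ Δ : List (PropF V)) (h : G Γ Δ) :
    Nc (Γ ++ Δ.map PropF.Neg) .Bot := by
  induction h with
  | Gax A Γ Δ hΓ hΔ =>
    refine Nc.ImpE _ A .Bot (.Nax _ _ ?_) (.Nax _ _ ?_)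
    · exact List.mem_append_right _ (List.mem_map_of_mem hΔ)
    · exact List.mem_append_left _ hΓ
  | GBot Γ Δ hΓ => exact .Nax _ _ (List.mem_append_left _ hΓ)
  | AndL A B Γ1 Γ2 Δ _ ih =>
    refine Nc_subst ih ?_
    intro C hC
    have hmem : A.Conj B ∈ (Γ1 ++ A.Conj B :: Γ2) ++ Δ.map PropF.Neg := by simp
    simp only [List.mem_append, List.mem_cons] at hC
    rcases hC with ((h1 | rfl | rfl | h2) | h3)
    · exact .Nax _ _ (by simp [h1])
    · exact .AndE1 _ _ B (.Nax _ _ hmem)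
    · exact .AndE2 _ A _ (.Nax _ _ hmem)
    · exact .Nax _ _ (by simp [h2])
    · exact .Nax _ _ (by simp [h3])
  | AndR A B Γ Δ1 Δ2 _ _ ih1 ih2 =>
    have hmem : (A.Conj B).Neg ∈ Γ ++ (Δ1 ++ A.Conj B :: Δ2).map PropF.Neg := by simp
    have hA : Nc (Γ ++ (Δ1 ++ A.Conj B :: Δ2).map PropF.Neg) A := by
      refine .BotC _ _ (Nc_weaken ih1 ?_)
      intro C hC
      simp only [List.map_append, List.map_cons, List.mem_append, List.mem_cons] at hC ⊢
      tauto
    have hB : Nc (Γ ++ (Δ1 ++ A.Conj B :: Δ2).map PropF.Neg) B := by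
      refine .BotC _ _ (Nc_weaken ih2 ?_)
      intro C hC
      simp only [List.map_append, List.map_cons, List.mem_append, List.mem_cons] at hC ⊢
      tauto
    exact .ImpE _ _ _ (.Nax _ _ hmem) (.AndI _ _ _ hA hB)
  | OrL A B Γ1 Γ2 Δ _ _ ih1 ih2 =>
    refine .OrE _ A B _ (.Nax _ _ (by simp)) (Nc_weaken ih1 ?_) (Nc_weaken ih2 ?_) <;>
    · intro C hC
      simp only [List.mem_append, List.mem_cons] at hC ⊢
      tauto
  | OrR A B Γ Δ1 Δ2 _ ih =>
    have hmem : (A.Disj B).Neg ∈ Γ ++ (Δ1 ++ A.Disj B :: Δ2).map PropF.Neg := by simp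
    refine Nc_subst ih ?_
    intro C hC
    simp only [List.map_append, List.map_cons, List.mem_append, List.mem_cons] at hC
    rcases hC with h1 | h2 | rfl | rfl | h3
    · exact .Nax _ _ (List.mem_append_left _ h1)
    · exact .Nax _ _ (by
        simp only [List.map_append, List.map_cons]
        exact List.mem_append_right _ (List.mem_append_left _ h2))
    · exact .ImpI _ _ _ (.ImpE _ (A.Disj B) _ (.Nax _ _ (List.mem_cons_of_mem _ hmem))
        (.OrI1 _ _ _ (.Nax _ _ (List.mem_cons_self))))
    · exact .ImpI _ _ _ (.ImpE _ (A.Disj B) _ (.Nax _ _ (List.mem_cons_of_mem _ hmem))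
        (.OrI2 _ _ _ (.Nax _ _ (List.mem_cons_self))))
    · exact .Nax _ _ (by
        simp only [List.map_append, List.map_cons]
        exact List.mem_append_right _ (List.mem_append_right _ (List.mem_cons_of_mem _ h3)))
  | ImpL A B Γ1 Γ2 Δ _ _ ih1 ih2 =>
    have hmem : A.Impl B ∈ (Γ1 ++ A.Impl B :: Γ2) ++ Δ.map PropF.Neg := by simp
    have hA : Nc ((Γ1 ++ A.Impl B :: Γ2) ++ Δ.map PropF.Neg) A := by
      refine .BotC _ _ (Nc_weaken ih2 ?_)
      intro C hC
      simp only [List.map_cons, List.mem_append, List.mem_map, List.mem_cons] at hC ⊢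
      tauto
    have hB : Nc ((Γ1 ++ A.Impl B :: Γ2) ++ Δ.map PropF.Neg) B :=
      .ImpE _ _ _ (.Nax _ _ hmem) hA
    refine Nc_subst ih1 ?_
    intro C hC
    simp only [List.mem_append, List.mem_cons] at hC
    rcases hC with (h1 | rfl | h2) | h3
    · exact .Nax _ _ (by simp [h1])
    · exact hB
    · exact .Nax _ _ (by simp [h2])
    · exact .Nax _ _ (by simp [h3])
  | ImpR A B Γ Δ1 Δ2 _ ih =>
    have hmem : (A.Impl B).Neg ∈ Γ ++ (Δ1 ++ A.Impl B :: Δ2).map PropF.Neg := by simp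
    refine .ImpE _ (A.Impl B) _ (.Nax _ _ hmem) (.ImpI _ _ _ (.BotC _ _ (Nc_weaken ih ?_)))
    intro C hC
    simp only [List.cons_append, List.map_append, List.map_cons, List.mem_cons,
      List.mem_append] at hC ⊢
    tauto
  | Cut A Γ Δ _ _ ih1 ih2 =>
    have hA : Nc (Γ ++ Δ.map PropF.Neg) A := by
      refine .BotC _ _ (Nc_weaken ih1 ?_)
      intro C hC
      simp only [List.map_cons, List.mem_append, List.mem_cons] at hC ⊢
      tauto
    have hNA : Nc (Γ ++ Δ.map PropF.Neg) A.Neg := by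
      refine .ImpI _ _ _ (Nc_weaken ih2 ?_)
      intro C hC
      simp only [List.cons_append, List.mem_cons, List.mem_append] at hC ⊢
      tauto
    exact .ImpE _ _ _ hNA hA
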